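/- Let X_1,…,X_n be independent real random variables with mean zero and 1 ≤ r ≤ 2, and suppose (1/n)∑_{i=1}^n E[|X_i|^r] ≤ C. Then for any c > 0, P(|∑_{i=1}^n X_i|/n > c) ≤ 2C/(c^r n^{r−1}). -/

import Mathlib

open MeasureTheory ProbabilityTheory

section VBEaux
open Real

/-- Subadditivity of `x ^ p` for `0 ≤ p ≤ 1`, real version. -/
lemma vbe_rpow_subadd {x y p : ℝ} (hx : 0 ≤ x) (hy : 0 ≤ y) (hp0 : 0 ≤ p) (hp1 : p ≤ 1) :
    (x + y) ^ p ≤ x ^ p + y ^ p := by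
  have h := NNReal.rpow_add_le_add_rpow x.toNNReal y.toNNReal hp0 hp1
  have := NNReal.coe_le_coe.2 h
  rw [← Real.toNNReal_add hx hy] at this
  rwa [NNReal.coe_add, NNReal.coe_rpow, NNReal.coe_rpow, NNReal.coe_rpow,
    Real.coe_toNNReal _ hx, Real.coe_toNNReal _ hy,
    Real.coe_toNNReal _ (add_nonneg hx hy)] at this

/-- Case `t ≥ 0`: `(1+t)^r ≤ 1 + r t + t^r`. -/
lemma vbe_case1 {r : ℝ} (hr1 : 1 ≤ r) (hr2 : r ≤ 2) {t : ℝ} (ht : 0 ≤ t) :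
    (1 + t) ^ r ≤ 1 + r * t + t ^ r := by
  set g : ℝ → ℝ := fun t => 1 + r * t + t ^ r - (1 + t) ^ r with hg
  have hr0 : (0:ℝ) < r := lt_of_lt_of_le one_pos hr1
  have hder : ∀ x : ℝ, 0 < x → HasDerivAt g (r + r * x ^ (r - 1) - r * (1 + x) ^ (r - 1) * 1) x := by
    intro x hx
    have h1 : HasDerivAt (fun t : ℝ => t ^ r) (r * x ^ (r - 1)) x := by
      simpa using Real.hasDerivAt_rpow_const (p := r) (Or.inl hx.ne')
    have h2 : HasDerivAt (fun t : ℝ => (1 + t) ^ r) (r * (1 + x) ^ (r - 1) * 1) x := by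
      have := (HasDerivAt.const_add 1 (hasDerivAt_id x)).rpow_const
        (p := r) (Or.inl (by positivity : (1 + id x : ℝ) ≠ 0))
      simpa [mul_comm, mul_assoc, mul_left_comm] using this
    have h3 : HasDerivAt (fun t : ℝ => 1 + r * t) r x := by
      simpa using (hasDerivAt_id x).const_mul r |>.const_add 1
    exact (h3.add h1).sub h2
  have hmono : MonotoneOn g (Set.Ici 0) := by
    apply monotoneOn_of_deriv_nonneg (convex_Ici 0)
    · apply Continuous.continuousOn
      have : Continuous fun t : ℝ => t ^ r := by
        rw [continuous_iff_continuousAt]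
        intro x
        exact Real.continuousAt_rpow_const x r (Or.inr hr0.le)
      have h2 : Continuous fun t : ℝ => (1 + t) ^ r :=
        this.comp (continuous_const.add continuous_id)
      fun_prop
    · intro x hx
      rw [interior_Ici] at hx
      exact ((hder x hx).differentiableAt).differentiableWithinAt
    · intro x hx
      rw [interior_Ici] at hx
      rw [(hder x hx).deriv]
      have hsub : (1 + x) ^ (r - 1) ≤ 1 ^ (r - 1) + x ^ (r - 1) :=
        vbe_rpow_subadd zero_le_one hx.le (by linarith) (by linarith)
      rw [Real.one_rpow] at hsub
      nlinarith [hsub, hr0]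
  have h0 : g 0 = 0 := by simp [hg, Real.zero_rpow hr0.ne']
  have := hmono (Set.self_mem_Ici) (Set.mem_Ici.2 ht) ht
  rw [h0] at this
  have hgt : 0 ≤ 1 + r * t + t ^ r - (1 + t) ^ r := this
  linarith

/-- Case `0 ≤ s ≤ 1`: `(1-s)^r ≤ 1 - r s + 2 s^r`. -/
lemma vbe_case2 {r : ℝ} (hr1 : 1 ≤ r) (hr2 : r ≤ 2) {s : ℝ} (hs0 : 0 ≤ s) (hs1 : s ≤ 1) :
    (1 - s) ^ r ≤ 1 - r * s + 2 * s ^ r := by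
  set h : ℝ → ℝ := fun s => 1 - r * s + 2 * s ^ r - (1 - s) ^ r with hh
  have hr0 : (0:ℝ) < r := lt_of_lt_of_le one_pos hr1
  have hder : ∀ x : ℝ, x ∈ Set.Ioo (0:ℝ) 1 →
      HasDerivAt h (-r + 2 * (r * x ^ (r - 1)) - r * (1 - x) ^ (r - 1) * (-1)) x := by
    intro x hx
    have h1 : HasDerivAt (fun t : ℝ => t ^ r) (r * x ^ (r - 1)) x := by
      simpa using Real.hasDerivAt_rpow_const (p := r) (Or.inl hx.1.ne')
    have h2 : HasDerivAt (fun t : ℝ => (1 - t) ^ r) (r * (1 - x) ^ (r - 1) * (-1)) x := by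
      have hbase : HasDerivAt (fun t : ℝ => 1 - t) (-1) x := by
        simpa using (hasDerivAt_id x).const_sub 1
      have := hbase.rpow_const (p := r) (Or.inl (by nlinarith [hx.2]))
      simpa [mul_comm, mul_assoc, mul_left_comm] using this
    have h3 : HasDerivAt (fun t : ℝ => 1 - r * t) (-r) x := by
      simpa using ((hasDerivAt_id x).const_mul r).const_sub 1
    exact (h3.add (h1.const_mul 2)).sub h2
  have hmono : MonotoneOn h (Set.Icc 0 1) := by
    apply monotoneOn_of_deriv_nonneg (convex_Icc 0 1)
    · apply Continuous.continuousOn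
      have hc : Continuous fun t : ℝ => t ^ r := by
        rw [continuous_iff_continuousAt]
        intro x
        exact Real.continuousAt_rpow_const x r (Or.inr hr0.le)
      have h2 : Continuous fun t : ℝ => (1 - t) ^ r :=
        hc.comp (continuous_const.sub continuous_id)
      fun_prop
    · intro x hx
      rw [interior_Icc] at hx
      exact ((hder x hx).differentiableAt).differentiableWithinAt
    · intro x hx
      rw [interior_Icc] at hx
      rw [(hder x hx).deriv]
      have e1 : x ≤ x ^ (r - 1) := by
        calc x = x ^ (1:ℝ) := (Real.rpow_one x).symm
        _ ≤ x ^ (r - 1) := Real.rpow_le_rpow_of_exponent_ge hx.1 (le_of_lt hx.2) (by linarith)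
      have e2 : 1 - x ≤ (1 - x) ^ (r - 1) := by
        calc 1 - x = (1 - x) ^ (1:ℝ) := (Real.rpow_one _).symm
        _ ≤ (1 - x) ^ (r - 1) :=
          Real.rpow_le_rpow_of_exponent_ge (by linarith [hx.2]) (by linarith [hx.1]) (by linarith)
      nlinarith [hx.1, hr0]
  have h0 : h 0 = 0 := by simp [hh, Real.zero_rpow hr0.ne', Real.one_rpow]
  have := hmono (Set.mem_Icc.2 ⟨le_refl 0, zero_le_one⟩) (Set.mem_Icc.2 ⟨hs0, hs1⟩) hs0
  rw [h0] at this
  have hgt : 0 ≤ 1 - r * s + 2 * s ^ r - (1 - s) ^ r := this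
  linarith

/-- Core inequality: `|1+t|^r ≤ 1 + r t + 2 |t|^r` for `1 ≤ r ≤ 2`. -/
lemma vbe_core {r : ℝ} (hr1 : 1 ≤ r) (hr2 : r ≤ 2) (t : ℝ) :
    |1 + t| ^ r ≤ 1 + r * t + 2 * |t| ^ r := by
  have hr0 : (0:ℝ) < r := lt_of_lt_of_le one_pos hr1
  rcases le_or_gt 0 t with ht | ht
  · rw [abs_of_nonneg (by linarith), abs_of_nonneg ht]
    have := vbe_case1 hr1 hr2 ht
    have htr : 0 ≤ t ^ r := Real.rpow_nonneg ht r
    linarith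
  rcases le_or_gt (-1) t with ht1 | ht1
  · -- -1 ≤ t < 0
    rw [abs_of_nonneg (by linarith), abs_of_neg ht]
    have := vbe_case2 hr1 hr2 (s := -t) (by linarith) (by linarith)
    have : (1 - -t) ^ r ≤ 1 - r * (-t) + 2 * (-t) ^ r := this
    simpa [sub_neg_eq_add] using this
  · -- t < -1
    rw [abs_of_neg (by linarith), abs_of_neg (by linarith)]
    set s : ℝ := -t with hs
    have hs1 : 1 < s := by simp [hs]; linarith
    have h1 : (s - 1) ^ r ≤ s ^ r :=
      Real.rpow_le_rpow (by linarith) (by linarith) hr0.le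
    have hbern : 1 + r * (s - 1) ≤ s ^ r := by
      have := one_add_mul_self_le_rpow_one_add (s := s - 1) (by linarith) hr1
      simpa using this
    have : -(1 + t) = s - 1 := by rw [hs]; ring
    rw [this]
    have : 1 + r * t + 2 * (-t) ^ r = 1 - r * s + 2 * s ^ r := by rw [hs]; ring_nf
    rw [this]
    nlinarith [h1, hbern]

/-- Two-variable version: `|x+y|^r ≤ |x|^r + (r * (|x|^r / x)) * y + 2 |y|^r`. -/
lemma vbe_key {r : ℝ} (hr1 : 1 ≤ r) (hr2 : r ≤ 2) (x y : ℝ) :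
    |x + y| ^ r ≤ |x| ^ r + r * (|x| ^ r / x) * y + 2 * |y| ^ r := by
  have hr0 : (0:ℝ) < r := lt_of_lt_of_le one_pos hr1
  rcases eq_or_ne x 0 with rfl | hx
  · simp [Real.zero_rpow hr0.ne']
    nlinarith [Real.rpow_nonneg (abs_nonneg y) r]
  · set t : ℝ := y / x with ht
    have hxy : x + y = x * (1 + t) := by rw [ht]; field_simp
    have habs : |x + y| = |x| * |1 + t| := by rw [hxy, abs_mul]
    have hmul : |x + y| ^ r = |x| ^ r * |1 + t| ^ r := by
      rw [habs, Real.mul_rpow (abs_nonneg _) (abs_nonneg _)]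
    have hcore := vbe_core hr1 hr2 t
    have hxpos : (0:ℝ) < |x| ^ r := Real.rpow_pos_of_pos (abs_pos.2 hx) r
    have hmain : |x| ^ r * |1 + t| ^ r ≤ |x| ^ r * (1 + r * t + 2 * |t| ^ r) :=
      mul_le_mul_of_nonneg_left hcore hxpos.le
    have e1 : |x| ^ r * (r * t) = r * (|x| ^ r / x) * y := by
      rw [ht]; field_simp
    have e2 : |x| ^ r * |t| ^ r = |y| ^ r := by
      rw [ht, abs_div, Real.div_rpow (abs_nonneg _) (abs_nonneg _)]
      field_simp
    calc |x + y| ^ r = |x| ^ r * |1 + t| ^ r := hmul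
      _ ≤ |x| ^ r * (1 + r * t + 2 * |t| ^ r) := hmain
      _ = |x| ^ r + |x| ^ r * (r * t) + 2 * (|x| ^ r * |t| ^ r) := by ring
      _ = |x| ^ r + r * (|x| ^ r / x) * y + 2 * |y| ^ r := by rw [e1, e2]

open MeasureTheory ProbabilityTheory

lemma vbe_g_meas (r : ℝ) : Measurable (fun x : ℝ => r * (|x| ^ r / x)) := by
  fun_prop

lemma vbe_g_bound {r : ℝ} (hr1 : 1 ≤ r) (x : ℝ) :
    ‖r * (|x| ^ r / x)‖ ≤ r * (1 + |x| ^ r) := by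
  have hr0 : (0:ℝ) < r := lt_of_lt_of_le one_pos hr1
  rcases eq_or_ne x 0 with rfl | hx
  · simp [Real.zero_rpow hr0.ne']
    positivity
  · have hax : (0:ℝ) < |x| := abs_pos.2 hx
    rw [Real.norm_eq_abs, abs_mul, abs_of_pos hr0, abs_div,
      abs_of_nonneg (Real.rpow_nonneg (abs_nonneg x) r)]
    have key : |x| ^ r / |x| ≤ 1 + |x| ^ r := by
      rcases le_or_gt (|x|) 1 with h1 | h1
      · have : |x| ^ r ≤ |x| ^ (1:ℝ) :=
          Real.rpow_le_rpow_of_exponent_ge hax h1 (by linarith)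
        rw [Real.rpow_one] at this
        have : |x| ^ r / |x| ≤ 1 := by
          rw [div_le_one hax]; exact this
        have hnn : (0:ℝ) ≤ |x| ^ r := Real.rpow_nonneg (abs_nonneg x) r
        linarith
      · have : |x| ^ r / |x| ≤ |x| ^ r := by
          apply div_le_self (Real.rpow_nonneg (abs_nonneg x) r) h1.le
        linarith
    exact mul_le_mul_of_nonneg_left key hr0.le

/-- One step of von Bahr–Esseen. -/
lemma vbe_step {Ω : Type*} [MeasurableSpace Ω] (μ : Measure Ω) [IsProbabilityMeasure μ]
    {r : ℝ} (hr1 : 1 ≤ r) (hr2 : r ≤ 2) {S Y : Ω → ℝ}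
    (hSm : Measurable S) (hYm : Measurable Y) (hSY : IndepFun S Y μ)
    (hYint : Integrable Y μ) (hYmean : ∫ ω, Y ω ∂μ = 0)
    (hSr : Integrable (fun ω => |S ω| ^ r) μ) (hYr : Integrable (fun ω => |Y ω| ^ r) μ) :
    Integrable (fun ω => |S ω + Y ω| ^ r) μ ∧
      ∫ ω, |S ω + Y ω| ^ r ∂μ ≤ (∫ ω, |S ω| ^ r ∂μ) + 2 * ∫ ω, |Y ω| ^ r ∂μ := by
  set g : ℝ → ℝ := fun x => r * (|x| ^ r / x) with hg
  have hgm : Measurable g := vbe_g_meas r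
  have hbint : Integrable (fun ω => r * (1 + |S ω| ^ r)) μ := by
    apply Integrable.const_mul
    exact (integrable_const (1:ℝ)).add hSr
  have hgS_int : Integrable (fun ω => g (S ω)) μ := by
    apply Integrable.mono' hbint ((hgm.comp hSm).aestronglyMeasurable)
    filter_upwards with ω
    exact vbe_g_bound hr1 (S ω)
  have hindep2 : IndepFun (fun ω => g (S ω)) Y μ := hSY.comp hgm measurable_id
  have hprod_int : Integrable (fun ω => g (S ω) * Y ω) μ :=
    hindep2.integrable_mul hgS_int hYint
  have hzero : ∫ ω, g (S ω) * Y ω ∂μ = 0 := by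
    have := hindep2.integral_mul_eq_mul_integral hgS_int.aestronglyMeasurable hYint.aestronglyMeasurable
    simp only [Pi.mul_apply] at this ⊢
    calc ∫ ω, g (S ω) * Y ω ∂μ = integral μ ((fun ω => g (S ω)) * Y) := by
          congr 1
      _ = integral μ (fun ω => g (S ω)) * integral μ Y := this
      _ = 0 := by rw [show integral μ Y = 0 from hYmean, mul_zero]
  have hrhs_int : Integrable (fun ω => |S ω| ^ r + g (S ω) * Y ω + 2 * |Y ω| ^ r) μ :=
    (hSr.add hprod_int).add (hYr.const_mul 2)
  have hptwise : ∀ ω, |S ω + Y ω| ^ r ≤ |S ω| ^ r + g (S ω) * Y ω + 2 * |Y ω| ^ r := by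
    intro ω
    simpa [hg] using vbe_key hr1 hr2 (S ω) (Y ω)
  have hlhs_int : Integrable (fun ω => |S ω + Y ω| ^ r) μ := by
    apply Integrable.mono' hrhs_int ((by fun_prop : Measurable fun ω => |S ω + Y ω| ^ r).aestronglyMeasurable)
    filter_upwards with ω
    rw [Real.norm_eq_abs, abs_of_nonneg (Real.rpow_nonneg (abs_nonneg _) r)]
    exact hptwise ω
  refine ⟨hlhs_int, ?_⟩
  calc ∫ ω, |S ω + Y ω| ^ r ∂μ
      ≤ ∫ ω, (|S ω| ^ r + g (S ω) * Y ω + 2 * |Y ω| ^ r) ∂μ :=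
        integral_mono hlhs_int hrhs_int hptwise
    _ = (∫ ω, |S ω| ^ r ∂μ) + (∫ ω, g (S ω) * Y ω ∂μ) + 2 * ∫ ω, |Y ω| ^ r ∂μ := by
        have hadd1 : Integrable (fun ω => |S ω| ^ r + g (S ω) * Y ω) μ := hSr.add hprod_int
        rw [integral_add hadd1 (hYr.const_mul 2), integral_add hSr hprod_int,
          integral_const_mul]
    _ = (∫ ω, |S ω| ^ r ∂μ) + 2 * ∫ ω, |Y ω| ^ r ∂μ := by rw [hzero]; ring

/-- Von Bahr–Esseen inequality (with constant 2) over a finset. -/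
lemma vbe_sum {Ω : Type*} [MeasurableSpace Ω] (μ : Measure Ω) [IsProbabilityMeasure μ]
    {n : ℕ} (X : Fin n → Ω → ℝ) (hmeas : ∀ i, Measurable (X i))
    (hindep : iIndepFun X μ)
    (hint : ∀ i, Integrable (X i) μ) (hmean : ∀ i, ∫ ω, X i ω ∂μ = 0)
    {r : ℝ} (hr1 : 1 ≤ r) (hr2 : r ≤ 2)
    (hrint : ∀ i, Integrable (fun ω => |X i ω| ^ r) μ) (s : Finset (Fin n)) :
    Integrable (fun ω => |∑ i ∈ s, X i ω| ^ r) μ ∧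
      ∫ ω, |∑ i ∈ s, X i ω| ^ r ∂μ ≤ 2 * ∑ i ∈ s, ∫ ω, |X i ω| ^ r ∂μ := by
  have hr0 : (0:ℝ) < r := lt_of_lt_of_le one_pos hr1
  induction s using Finset.induction with
  | empty =>
    constructor
    · simpa [Real.zero_rpow hr0.ne'] using integrable_const (0:ℝ) (μ := μ)
    · simp [Real.zero_rpow hr0.ne']
  | @insert i s hi ih =>
    have hSm : Measurable (fun ω => ∑ j ∈ s, X j ω) :=
      Finset.measurable_sum s (fun j _ => hmeas j)
    have hSY : IndepFun (fun ω => ∑ j ∈ s, X j ω) (X i) μ := by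
      have := hindep.indepFun_finsetSum_of_notMem hmeas hi
      have he : (∑ j ∈ s, X j) = fun ω => ∑ j ∈ s, X j ω := by
        ext ω; simp
      rwa [he] at this
    obtain ⟨hIntS, hIneqS⟩ := ih
    obtain ⟨hInt, hIneq⟩ := vbe_step μ hr1 hr2 hSm (hmeas i) hSY (hint i) (hmean i)
      hIntS (hrint i)
    have hcomm : ∀ ω, ∑ j ∈ insert i s, X j ω = (∑ j ∈ s, X j ω) + X i ω := by
      intro ω; rw [Finset.sum_insert hi]; ring
    constructor
    · apply hInt.congr
      filter_upwards with ω
      rw [hcomm ω]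
    · calc ∫ ω, |∑ j ∈ insert i s, X j ω| ^ r ∂μ
          = ∫ ω, |(∑ j ∈ s, X j ω) + X i ω| ^ r ∂μ := by
            congr 1; ext ω; rw [hcomm ω]
        _ ≤ (∫ ω, |∑ j ∈ s, X j ω| ^ r ∂μ) + 2 * ∫ ω, |X i ω| ^ r ∂μ := hIneq
        _ ≤ 2 * ∑ j ∈ s, (∫ ω, |X j ω| ^ r ∂μ) + 2 * ∫ ω, |X i ω| ^ r ∂μ := by linarith
        _ = 2 * ∑ j ∈ insert i s, ∫ ω, |X j ω| ^ r ∂μ := by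
            rw [Finset.sum_insert hi]; ring


end VBEaux

/-- Von Bahr–Esseen + Markov: if `X₁,…,Xₙ` are independent, mean zero, `1 ≤ r ≤ 2`,
and `(1/n)∑ E|Xᵢ|^r ≤ C`, then `P(|∑ Xᵢ|/n > c) ≤ 2C/(c^r n^{r−1})`. -/
theorem vonBahrEsseen_markov
    {Ω : Type*} [MeasurableSpace Ω] (μ : Measure Ω) [IsProbabilityMeasure μ]
    (n : ℕ) (hn : 0 < n) (X : Fin n → Ω → ℝ)
    (hmeas : ∀ i, Measurable (X i))
    (hindep : iIndepFun X μ)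
    (hint : ∀ i, Integrable (X i) μ)
    (hmean : ∀ i, ∫ ω, X i ω ∂μ = 0)
    (r C c : ℝ) (hr1 : 1 ≤ r) (hr2 : r ≤ 2) (hC : 0 < C) (hc : 0 < c)
    (hrint : ∀ i, Integrable (fun ω => |X i ω| ^ r) μ)
    (hmom : (1 / (n : ℝ)) * ∑ i, ∫ ω, |X i ω| ^ r ∂μ ≤ C) :
    (μ {ω | c < |∑ i, X i ω| / n}).toReal ≤ 2 * C / (c ^ r * (n : ℝ) ^ (r - 1)) := by
  have hr0 : (0:ℝ) < r := lt_of_lt_of_le one_pos hr1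
  have hnpos : (0:ℝ) < n := Nat.cast_pos.2 hn
  obtain ⟨hSint, hSineq⟩ := vbe_sum μ X hmeas hindep hint hmean hr1 hr2 hrint Finset.univ
  have hsum : ∑ i, ∫ ω, |X i ω| ^ r ∂μ ≤ C * n := by
    rw [one_div, inv_mul_le_iff₀ hnpos] at hmom
    linarith [hmom]
  have hEr : ∫ ω, |∑ i, X i ω| ^ r ∂μ ≤ 2 * (C * n) := by
    calc ∫ ω, |∑ i, X i ω| ^ r ∂μ ≤ 2 * ∑ i, ∫ ω, |X i ω| ^ r ∂μ := hSineq
      _ ≤ 2 * (C * n) := by linarith [hsum]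
  set a : ℝ := (c * n) ^ r with ha
  have hapos : 0 < a := Real.rpow_pos_of_pos (by positivity) r
  have hsub : {ω | c < |∑ i, X i ω| / n} ⊆ {ω | a ≤ |∑ i, X i ω| ^ r} := by
    intro ω hω
    simp only [Set.mem_setOf_eq] at hω ⊢
    have h1 : c * n < |∑ i, X i ω| := by
      rw [lt_div_iff₀ hnpos] at hω; linarith
    exact Real.rpow_le_rpow (by positivity) h1.le hr0.le
  have hmarkov := mul_meas_ge_le_integral_of_nonneg
    (Filter.Eventually.of_forall fun ω => Real.rpow_nonneg (abs_nonneg _) r) hSint a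
  have hm1 : (μ {ω | c < |∑ i, X i ω| / n}).toReal
      ≤ (μ {ω | a ≤ |∑ i, X i ω| ^ r}).toReal :=
    ENNReal.toReal_mono (measure_ne_top μ _) (measure_mono hsub)
  have hm2 : (μ {ω | a ≤ |∑ i, X i ω| ^ r}).toReal ≤ 2 * (C * n) / a := by
    rw [le_div_iff₀ hapos]
    calc (μ {ω | a ≤ |∑ i, X i ω| ^ r}).toReal * a
        = a * (μ {ω | a ≤ |∑ i, X i ω| ^ r}).toReal := by ring
      _ ≤ ∫ ω, |∑ i, X i ω| ^ r ∂μ := hmarkov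
      _ ≤ 2 * (C * n) := hEr
  have hfinal : 2 * (C * n) / a = 2 * C / (c ^ r * (n : ℝ) ^ (r - 1)) := by
    rw [ha, Real.mul_rpow hc.le hnpos.le]
    have : (n:ℝ) ^ r = (n:ℝ) ^ (r - 1) * n := by
      conv_lhs => rw [show r = (r - 1) + 1 by ring]
      rw [Real.rpow_add hnpos, Real.rpow_one]
    rw [this]
    have h1 : c ^ r ≠ 0 := (Real.rpow_pos_of_pos hc r).ne'
    have h2 : (n:ℝ) ^ (r - 1) ≠ 0 := (Real.rpow_pos_of_pos hnpos _).ne'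
    field_simp
  linarith [hm1, hm2, hfinal.le, hfinal.ge]
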